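/- There exists a universal constant C ∈ (0,∞) such that the following holds for every finite set E with #E ≥ 2, every irreducible stochastic kernel q on E with zero trace and stationary π, every compact metric space S, and every finite nonnegative Borel measure μ on S. For every continuous f : S × S → ℝ with f(σ,σ) = 0 for all σ and sup_{σ,τ} |f(σ,τ)| ≤ 1, all x, y ∈ E and t ≥ 0, letting F(ζ) := f(ζ(x), ζ(y)) for ζ ∈ S^E, one has sup_{ξ ∈ S^E} (P_t F)(ξ) ≤ (C + 1) P(M_{x,y} > t) + C μ(S) ∫_0^t P(M_{x,y} > r) dr. -/

import Mathlib

set_option maxHeartbeats 1000000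
set_option synthInstance.maxHeartbeats 400000
set_option linter.unusedSectionVars false
set_option linter.deprecated false


open MeasureTheory Finset

universe u v

/-- Voting generator `L_VM F(ξ) = ∑_{x,y} q(x,y)[F(ξ^{x,y}) − F(ξ)]`. -/
noncomputable def LVM {E S : Type*} [Fintype E] [DecidableEq E]
    (q : E → E → ℝ) (F : (E → S) → ℝ) (ξ : E → S) : ℝ :=
  ∑ x : E, ∑ y : E, q x y * (F (Function.update ξ x (ξ y)) - F ξ)

/-- Mutation generator `L_μ F(ξ) = ∑_{x∈E} ∫_S [F(ξ^{x|σ}) − F(ξ)] dμ(σ)`. -/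
noncomputable def Lmu {E S : Type*} [Fintype E] [DecidableEq E] [MeasurableSpace S]
    (μ : Measure S) (F : (E → S) → ℝ) (ξ : E → S) : ℝ :=
  ∑ x : E, ∫ σ, (F (Function.update ξ x σ) - F ξ) ∂μ

/-- Exponential of a bounded operator on a normed space, `exp(A)`. -/
noncomputable def expOp {M : Type*} [NormedAddCommGroup M] [NormedSpace ℝ M]
    (A : M →L[ℝ] M) : M →L[ℝ] M :=
  NormedSpace.exp A

/-- Off-diagonal entries of the coalescing-pair generator `Q̂`. -/
noncomputable def QhatOff {E : Type*} [Fintype E] [DecidableEq E]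
    (q : E → E → ℝ) : Matrix (E × E) (E × E) ℝ :=
  Matrix.of fun p r =>
    if r = p then 0
    else if p.1 = p.2 then (if r.1 = r.2 then q p.1 r.1 else 0)
    else if r.2 = p.2 ∧ r.1 ≠ p.1 then q p.1 r.1
    else if r.1 = p.1 ∧ r.2 ≠ p.2 then q p.2 r.2
    else 0

/-- The coalescing-pair generator matrix `Q̂` on `E × E` (rows sum to zero). -/
noncomputable def Qhat {E : Type*} [Fintype E] [DecidableEq E]
    (q : E → E → ℝ) : Matrix (E × E) (E × E) ℝ :=
  Matrix.of fun p r =>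
    if r = p then -(∑ r' : E × E, QhatOff q p r') else QhatOff q p r

/-- The coalescing-pair semigroup `p̂_t = exp(t Q̂)`. -/
noncomputable def coalSemigroup {E : Type*} [Fintype E] [DecidableEq E]
    (q : E → E → ℝ) (t : ℝ) : Matrix (E × E) (E × E) ℝ :=
  NormedSpace.exp (t • Qhat q)

/-- The non-meeting probability `P(M_{x,y} > t) = ∑_{a ≠ b} p̂_t((x,y),(a,b))`. -/
noncomputable def meetGT {E : Type*} [Fintype E] [DecidableEq E]
    (q : E → E → ℝ) (t : ℝ) (x y : E) : ℝ :=
  ∑ p ∈ Finset.univ.filter (fun p : E × E => p.1 ≠ p.2), coalSemigroup q t (x, y) p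

/-- The observable `ζ ↦ f(ζ(x), ζ(y))` as a continuous function on `S^E`. -/
noncomputable def pairObs {E S : Type*} [TopologicalSpace S]
    (x y : E) (f : C(S × S, ℝ)) : C((E → S), ℝ) :=
  ⟨fun ζ => f (ζ x, ζ y), by fun_prop⟩

section MatrixAux
variable {E : Type*} [Fintype E] [DecidableEq E] (q : E → E → ℝ)

lemma qhatOff_nonneg (hq0 : ∀ x y, 0 ≤ q x y) (p r : E × E) : 0 ≤ QhatOff q p r := by
  unfold QhatOff
  simp only [Matrix.of_apply]
  split_ifs <;> first | exact le_refl 0 | exact hq0 _ _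

lemma qhatOff_apply_diag (a : E) (g : E × E → ℝ) (hqd : q a a = 0) :
    ∑ r : E × E, QhatOff q (a, a) r * g r = ∑ c, q a c * g (c, c) := by
  rw [Fintype.sum_prod_type]
  have point : ∀ c d : E, QhatOff q (a, a) (c, d) * g (c, d)
      = if d = c then q a c * g (c, c) else 0 := by
    intro c d
    unfold QhatOff
    simp only [Matrix.of_apply]
    rcases eq_or_ne d c with h | h
    · subst h
      rcases eq_or_ne d a with h2 | h2
      · subst h2; simp [hqd]
      · simp [Prod.ext_iff, h2]
    · simp [h, Ne.symm h, Prod.ext_iff]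
  simp only [point, Finset.sum_ite_eq', Finset.mem_univ, if_true]

lemma qhatOff_apply_offdiag {a b : E} (hab : a ≠ b) (g : E × E → ℝ)
    (hqa : q a a = 0) (hqb : q b b = 0) :
    ∑ r : E × E, QhatOff q (a, b) r * g r
      = ∑ c, q a c * g (c, b) + ∑ d, q b d * g (a, d) := by
  rw [Fintype.sum_prod_type]
  have point : ∀ c d : E, QhatOff q (a, b) (c, d) * g (c, d)
      = (if d = b then (if c = a then 0 else q a c * g (c, b)) else 0)
        + (if c = a then (if d = b then 0 else q b d * g (a, d)) else 0) := by
    intro c d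
    unfold QhatOff
    simp only [Matrix.of_apply]
    rcases eq_or_ne c a with hc | hc <;> rcases eq_or_ne d b with hd | hd <;>
      simp [Prod.ext_iff, hc, hd, hab, Ne.symm hab]
  simp only [point, Finset.sum_add_distrib]
  congr 1
  · simp only [Finset.sum_ite_eq', Finset.mem_univ, if_true]
    exact Finset.sum_congr rfl fun c _ => by
      rcases eq_or_ne c a with h | h
      · subst h; simp [hqa]
      · simp [h]
  · rw [Finset.sum_comm]
    simp only [Finset.sum_ite_eq', Finset.mem_univ, if_true]
    exact Finset.sum_congr rfl fun d _ => by
      rcases eq_or_ne d b with h | h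
      · subst h; simp [hqb]
      · simp [h]


lemma qhatOff_sum_offdiag {a b : E} (hab : a ≠ b) (hq1 : ∀ z, ∑ w, q z w = 1)
    (hqd : ∀ z, q z z = 0) : ∑ r : E × E, QhatOff q (a, b) r = 2 := by
  have := qhatOff_apply_offdiag q hab (fun _ => 1) (hqd a) (hqd b)
  simp only [mul_one] at this
  rw [this, hq1 a, hq1 b]; norm_num

lemma qhatOff_sum_le_two (hq1 : ∀ z, ∑ w, q z w = 1) (hqd : ∀ z, q z z = 0) (p : E × E) :
    ∑ r : E × E, QhatOff q p r ≤ 2 := by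
  obtain ⟨a, b⟩ := p
  rcases eq_or_ne a b with rfl | hab
  · have := qhatOff_apply_diag q a (fun _ => 1) (hqd a)
    simp only [mul_one] at this
    rw [this, hq1 a]; norm_num
  · exact le_of_eq (qhatOff_sum_offdiag q hab hq1 hqd)

lemma aux_matrix_exp_nonneg {n : Type*} [Fintype n] [DecidableEq n]
    (B : Matrix n n ℝ) (hB : ∀ i j, 0 ≤ B i j) (i j : n) : 0 ≤ NormedSpace.exp B i j := by
  letI : SeminormedRing (Matrix n n ℝ) := Matrix.linftyOpSemiNormedRing
  letI : NormedRing (Matrix n n ℝ) := Matrix.linftyOpNormedRing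
  letI : NormedAlgebra ℝ (Matrix n n ℝ) := Matrix.linftyOpNormedAlgebra
  have hpow : ∀ (k : ℕ) (i j : n), 0 ≤ (B ^ k) i j := by
    intro k
    induction k with
    | zero => intro i j; rcases eq_or_ne i j with h | h <;> simp [Matrix.one_apply, h]
    | succ k ih =>
      intro i j
      rw [pow_succ, Matrix.mul_apply]
      exact Finset.sum_nonneg fun c _ => mul_nonneg (ih i c) (hB c j)
  have hs := NormedSpace.exp_series_hasSum_exp' (𝕂 := ℝ) B
  let eAH : Matrix n n ℝ →+ ℝ :=
    { toFun := fun A => A i j, map_zero' := rfl, map_add' := fun _ _ => rfl }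
  have hcont : Continuous eAH := by
    exact ((continuous_apply j).comp (continuous_apply i))
  have hs2 := hs.map eAH hcont
  exact hs2.nonneg fun k => by
    show 0 ≤ (((k.factorial : ℝ))⁻¹ • B ^ k) i j
    simpa [eAH, Matrix.smul_apply, smul_eq_mul] using
      mul_nonneg (by positivity : (0:ℝ) ≤ ((k.factorial : ℝ))⁻¹) (hpow k i j)

lemma coal_nonneg (hq0 : ∀ x y, 0 ≤ q x y) (hq1 : ∀ z, ∑ w, q z w = 1)
    (hqd : ∀ z, q z z = 0) {s : ℝ} (hs : 0 ≤ s) (p r : E × E) :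
    0 ≤ coalSemigroup q s p r := by
  letI : SeminormedRing (Matrix (E × E) (E × E) ℝ) := Matrix.linftyOpSemiNormedRing
  letI : NormedRing (Matrix (E × E) (E × E) ℝ) := Matrix.linftyOpNormedRing
  letI : NormedAlgebra ℝ (Matrix (E × E) (E × E) ℝ) := Matrix.linftyOpNormedAlgebra
  have hsplit : s • Qhat q = (s • Qhat q + (2 * s) • (1 : Matrix (E × E) (E × E) ℝ))
      + (-(2 * s)) • (1 : Matrix (E × E) (E × E) ℝ) := by
    rw [add_assoc, ← add_smul]; simp
  have hcomm : Commute (s • Qhat q + (2 * s) • (1 : Matrix (E × E) (E × E) ℝ))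
      ((-(2 * s)) • (1 : Matrix (E × E) (E × E) ℝ)) := (Commute.one_right _).smul_right _
  unfold coalSemigroup
  rw [hsplit, Matrix.exp_add_of_commute _ _ hcomm]
  have hone : NormedSpace.exp ((-(2 * s)) • (1 : Matrix (E × E) (E × E) ℝ))
      = Real.exp (-(2 * s)) • (1 : Matrix (E × E) (E × E) ℝ) := by
    rw [show ((-(2 * s)) • (1 : Matrix (E × E) (E × E) ℝ)) = algebraMap ℝ _ (-(2 * s)) from
      (Algebra.algebraMap_eq_smul_one _).symm]
    erw [← NormedSpace.algebraMap_exp_comm]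
    rw [Algebra.algebraMap_eq_smul_one, ← Real.exp_eq_exp_ℝ]
  rw [hone, Matrix.mul_smul, Matrix.mul_one, Matrix.smul_apply, smul_eq_mul]
  refine mul_nonneg (Real.exp_nonneg _) (aux_matrix_exp_nonneg _ ?_ p r)
  intro i j
  rw [Matrix.add_apply, Matrix.smul_apply, Matrix.smul_apply, smul_eq_mul, smul_eq_mul]
  rcases eq_or_ne i j with rfl | h
  · rw [Matrix.one_apply_eq, mul_one]
    have : Qhat q i i = -(∑ r' : E × E, QhatOff q i r') := by unfold Qhat; simp
    rw [this]
    nlinarith [qhatOff_sum_le_two q hq1 hqd i]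
  · have : Qhat q i j = QhatOff q i j := by unfold Qhat; simp [Ne.symm h]
    rw [Matrix.one_apply_ne h, mul_zero, add_zero, this]
    exact mul_nonneg hs (qhatOff_nonneg q hq0 i j)

lemma coal_hasDerivAt (p r : E × E) (s : ℝ) :
    HasDerivAt (fun u : ℝ => coalSemigroup q u p r)
      ((coalSemigroup q s * Qhat q) p r) s := by
  letI : SeminormedRing (Matrix (E × E) (E × E) ℝ) := Matrix.linftyOpSemiNormedRing
  letI : NormedRing (Matrix (E × E) (E × E) ℝ) := Matrix.linftyOpNormedRing
  letI : NormedAlgebra ℝ (Matrix (E × E) (E × E) ℝ) := Matrix.linftyOpNormedAlgebra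
  have h := hasDerivAt_exp_smul_const (𝕂 := ℝ) (Qhat q) s
  let eLM : Matrix (E × E) (E × E) ℝ →ₗ[ℝ] ℝ :=
    { toFun := fun A => A p r, map_add' := fun _ _ => rfl, map_smul' := fun _ _ => rfl }
  exact (LinearMap.toContinuousLinearMap eLM).hasFDerivAt.comp_hasDerivAt s h

lemma coal_continuous (p r : E × E) :
    Continuous fun s : ℝ => coalSemigroup q s p r :=
  continuous_iff_continuousAt.mpr fun s => (coal_hasDerivAt q p r s).continuousAt

end MatrixAux

lemma aux_norm_exp_clm_le {X : Type*} [NormedAddCommGroup X] [NormedSpace ℝ X] [CompleteSpace X]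
    (A : X →L[ℝ] X) {c : ℝ} (hA : ‖A‖ ≤ c) : ‖NormedSpace.exp A‖ ≤ Real.exp c := by
  have hc : 0 ≤ c := le_trans (norm_nonneg A) hA
  rw [NormedSpace.exp_eq_tsum ℝ]
  have hsum := NormedSpace.norm_expSeries_summable' (𝕂 := ℝ) A
  have hsum2 : Summable fun n : ℕ => (n.factorial : ℝ)⁻¹ * c ^ n := by
    simpa [smul_eq_mul] using NormedSpace.expSeries_summable' (𝕂 := ℝ) c
  refine le_trans (norm_tsum_le_tsum_norm hsum) (le_trans (Summable.tsum_le_tsum ?_ hsum hsum2) ?_)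
  · intro n
    rw [norm_smul]
    have h1 : ‖((n.factorial : ℝ))⁻¹‖ = (n.factorial : ℝ)⁻¹ := by
      rw [Real.norm_eq_abs, abs_of_nonneg] ; positivity
    rw [h1]
    refine mul_le_mul_of_nonneg_left ?_ (by positivity)
    rcases Nat.eq_zero_or_pos n with h0 | hpos
    · subst h0
      rw [pow_zero, pow_zero]; exact ContinuousLinearMap.norm_id_le
    · exact le_trans (norm_pow_le' A hpos) (pow_le_pow_left₀ (norm_nonneg A) hA n)
  · rw [Real.exp_eq_exp_ℝ, NormedSpace.exp_eq_tsum ℝ]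
    exact le_of_eq (by simp [smul_eq_mul])

section Contraction

variable {E : Type*} [Fintype E] [DecidableEq E]
  {S : Type*} [MetricSpace S] [CompactSpace S] [MeasurableSpace S] [BorelSpace S]

lemma aux_update_integrable (μ : Measure S) [IsFiniteMeasure μ]
    (G : C((E → S), ℝ)) (ζ : E → S) (z : E) :
    Integrable (fun σ => G (Function.update ζ z σ)) μ := by
  have hc : Continuous fun σ : S => Function.update ζ z σ := by
    refine continuous_pi fun w => ?_
    rcases eq_or_ne w z with h | h
    · subst h; simpa only [Function.update_self] using continuous_id'
    · simpa only [Function.update_of_ne h] using (continuous_const : Continuous fun _ : S => ζ w)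
  exact (G.continuous.comp hc).integrable_of_hasCompactSupport
    (HasCompactSupport.of_compactSpace _)

lemma aux_contraction (q : E → E → ℝ) (μ : Measure S) [IsFiniteMeasure μ]
    (hq0 : ∀ x y, 0 ≤ q x y) (hq1 : ∀ x, ∑ y, q x y = 1)
    (L : C((E → S), ℝ) →L[ℝ] C((E → S), ℝ))
    (hL : ∀ (F : C((E → S), ℝ)) (ζ : E → S), L F ζ = LVM q (⇑F) ζ + Lmu μ (⇑F) ζ)
    {u : ℝ} (hu : 0 ≤ u) : ‖expOp (u • L)‖ ≤ 1 := by
  letI : NormedAddCommGroup C((E → S), ℝ) := inferInstance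
  letI : NormedSpace ℝ C((E → S), ℝ) := inferInstance
  unfold expOp
  set c : ℝ := (Fintype.card E : ℝ) * (1 + (μ Set.univ).toReal) with hc
  have hc0 : 0 ≤ c := by positivity
  -- pointwise bound on L G + c • G
  have hBnd : ∀ G : C((E → S), ℝ), ‖L G + c • G‖ ≤ c * ‖G‖ := by
    intro G
    refine (ContinuousMap.norm_le _ (by positivity)).mpr fun ζ => ?_
    have happ : (L G + c • G) ζ = L G ζ + c * G ζ := by
      simp [ContinuousMap.add_apply, ContinuousMap.smul_apply, smul_eq_mul]
    rw [happ, hL G ζ]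
    have hLVM : LVM q (⇑G) ζ = (∑ z : E, ∑ w : E, q z w * G (Function.update ζ z (ζ w)))
        - (Fintype.card E : ℝ) * G ζ := by
      unfold LVM
      simp only [mul_sub, Finset.sum_sub_distrib, ← Finset.sum_mul, hq1, one_mul]
      simp [Finset.card_univ]
    have hLmu : Lmu μ (⇑G) ζ = (∑ z : E, ∫ σ, G (Function.update ζ z σ) ∂μ)
        - (Fintype.card E : ℝ) * ((μ Set.univ).toReal * G ζ) := by
      unfold Lmu
      have e1 : ∀ z : E, ∫ σ, (G (Function.update ζ z σ) - G ζ) ∂μ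
          = (∫ σ, G (Function.update ζ z σ) ∂μ) - (μ Set.univ).toReal * G ζ := by
        intro z
        rw [integral_sub (aux_update_integrable μ G ζ z) (integrable_const _),
          integral_const, smul_eq_mul, measureReal_def]
      simp only [e1, Finset.sum_sub_distrib, Finset.sum_const, Finset.card_univ,
        nsmul_eq_mul]
    have key : LVM q (⇑G) ζ + Lmu μ (⇑G) ζ + c * G ζ
        = (∑ z : E, ∑ w : E, q z w * G (Function.update ζ z (ζ w)))
          + ∑ z : E, ∫ σ, G (Function.update ζ z σ) ∂μ := by
      rw [hLVM, hLmu, hc]; ring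
    rw [Real.norm_eq_abs]
    -- bound the two sums
    have h1 : |∑ z : E, ∑ w : E, q z w * G (Function.update ζ z (ζ w))|
        ≤ (Fintype.card E : ℝ) * ‖G‖ := by
      refine le_trans (Finset.abs_sum_le_sum_abs _ _) ?_
      have : ∀ z : E, |∑ w : E, q z w * G (Function.update ζ z (ζ w))| ≤ ‖G‖ := by
        intro z
        refine le_trans (Finset.abs_sum_le_sum_abs _ _) ?_
        calc ∑ w : E, |q z w * G (Function.update ζ z (ζ w))|
            ≤ ∑ w : E, q z w * ‖G‖ := by
              refine Finset.sum_le_sum fun w _ => ?_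
              rw [abs_mul, abs_of_nonneg (hq0 z w)]
              exact mul_le_mul_of_nonneg_left
                (by simpa [Real.norm_eq_abs] using G.norm_coe_le_norm _) (hq0 z w)
          _ = ‖G‖ := by rw [← Finset.sum_mul, hq1, one_mul]
      calc ∑ z : E, |∑ w : E, q z w * G (Function.update ζ z (ζ w))|
          ≤ ∑ _z : E, ‖G‖ := Finset.sum_le_sum fun z _ => this z
        _ = (Fintype.card E : ℝ) * ‖G‖ := by simp [Finset.card_univ, mul_comm]
    have h2 : |∑ z : E, ∫ σ, G (Function.update ζ z σ) ∂μ|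
        ≤ (Fintype.card E : ℝ) * (‖G‖ * (μ Set.univ).toReal) := by
      refine le_trans (Finset.abs_sum_le_sum_abs _ _) ?_
      have : ∀ z : E, |∫ σ, G (Function.update ζ z σ) ∂μ| ≤ ‖G‖ * (μ Set.univ).toReal := by
        intro z
        simpa [Real.norm_eq_abs, measureReal_def] using
          norm_integral_le_of_norm_le_const (μ := μ)
            (f := fun σ => G (Function.update ζ z σ)) (C := ‖G‖)
            (Filter.Eventually.of_forall fun σ => by
              simpa [Real.norm_eq_abs] using G.norm_coe_le_norm _)
      calc ∑ z : E, |∫ σ, G (Function.update ζ z σ) ∂μ|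
          ≤ ∑ _z : E, ‖G‖ * (μ Set.univ).toReal := Finset.sum_le_sum fun z _ => this z
        _ = (Fintype.card E : ℝ) * (‖G‖ * (μ Set.univ).toReal) := by
            simp [Finset.card_univ, mul_comm]
    calc |LVM q (⇑G) ζ + Lmu μ (⇑G) ζ + c * G ζ|
        = |(∑ z : E, ∑ w : E, q z w * G (Function.update ζ z (ζ w)))
            + ∑ z : E, ∫ σ, G (Function.update ζ z σ) ∂μ| := by rw [key]
      _ ≤ |∑ z : E, ∑ w : E, q z w * G (Function.update ζ z (ζ w))|
            + |∑ z : E, ∫ σ, G (Function.update ζ z σ) ∂μ| := abs_add_le _ _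
      _ ≤ (Fintype.card E : ℝ) * ‖G‖
            + (Fintype.card E : ℝ) * (‖G‖ * (μ Set.univ).toReal) := add_le_add h1 h2
      _ = c * ‖G‖ := by rw [hc]; ring
  -- operator norm bound for B = u • L + (u*c) • 1
  have hBop : ‖u • L + (u * c) • (1 : C((E → S), ℝ) →L[ℝ] C((E → S), ℝ))‖ ≤ u * c := by
    refine ContinuousLinearMap.opNorm_le_bound _ (by positivity) fun G => ?_
    have : (u • L + (u * c) • (1 : C((E → S), ℝ) →L[ℝ] C((E → S), ℝ))) G
        = u • (L G + c • G) := by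
      simp [ContinuousLinearMap.add_apply, ContinuousLinearMap.smul_apply,
        ContinuousLinearMap.one_apply, smul_add, smul_smul, mul_comm]
    rw [this]
    refine le_trans (norm_smul_le _ _) ?_
    rw [Real.norm_eq_abs, abs_of_nonneg hu]
    calc u * ‖L G + c • G‖ ≤ u * (c * ‖G‖) :=
          mul_le_mul_of_nonneg_left (hBnd G) hu
      _ = u * c * ‖G‖ := by ring
  have hsplit : u • L = (u • L + (u * c) • (1 : C((E → S), ℝ) →L[ℝ] C((E → S), ℝ)))
      + (-(u * c)) • 1 := by
    rw [add_assoc, ← add_smul, add_neg_cancel, zero_smul, add_zero]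
  have hcomm : Commute (u • L + (u * c) • (1 : C((E → S), ℝ) →L[ℝ] C((E → S), ℝ)))
      ((-(u * c)) • (1 : C((E → S), ℝ) →L[ℝ] C((E → S), ℝ))) :=
    (Commute.one_right _).smul_right _
  letI : NormedAlgebra ℚ (C((E → S), ℝ) →L[ℝ] C((E → S), ℝ)) :=
    NormedAlgebra.restrictScalars ℚ ℝ _
  rw [hsplit, NormedSpace.exp_add_of_commute hcomm]
  have hone : NormedSpace.exp ((-(u * c)) • (1 : C((E → S), ℝ) →L[ℝ] C((E → S), ℝ)))
      = Real.exp (-(u * c)) • 1 := by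
    rw [show ((-(u * c)) • (1 : C((E → S), ℝ) →L[ℝ] C((E → S), ℝ)))
        = algebraMap ℝ _ (-(u * c)) from (Algebra.algebraMap_eq_smul_one _).symm,
      ← NormedSpace.algebraMap_exp_comm, Algebra.algebraMap_eq_smul_one, ← Real.exp_eq_exp_ℝ]
  rw [hone]
  calc ‖NormedSpace.exp (u • L + (u * c) • 1) * (Real.exp (-(u * c)) • 1)‖
      ≤ ‖NormedSpace.exp (u • L + (u * c) • 1)‖ * ‖Real.exp (-(u * c)) • (1 : C((E → S), ℝ) →L[ℝ] C((E → S), ℝ))‖ := norm_mul_le _ _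
    _ ≤ Real.exp (u * c) * (Real.exp (-(u * c)) * 1) := by
        refine mul_le_mul (aux_norm_exp_clm_le _ hBop) ?_ (norm_nonneg _) (Real.exp_nonneg _)
        refine ContinuousLinearMap.opNorm_le_bound _ (by positivity) fun G => ?_
        rw [ContinuousLinearMap.smul_apply, ContinuousLinearMap.one_apply, norm_smul,
          Real.norm_eq_abs, abs_of_nonneg (Real.exp_nonneg _), mul_one]
    _ = 1 := by rw [mul_one, ← Real.exp_add]; simp

end Contraction

section Dual
variable {E : Type*} [Fintype E] [DecidableEq E] {S : Type*} [TopologicalSpace S]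

lemma aux_qhat_split {E : Type*} [Fintype E] [DecidableEq E] (q : E → E → ℝ) (p r : E × E) :
    Qhat q p r = QhatOff q p r + (if r = p then -(∑ r' : E × E, QhatOff q p r') else 0) := by
  rcases eq_or_ne r p with rfl | h
  · have h0 : QhatOff q r r = 0 := by unfold QhatOff; simp
    unfold Qhat; simp [h0]
  · unfold Qhat; simp [h]

lemma aux_duality (q : E → E → ℝ) (hq1 : ∀ z, ∑ w, q z w = 1) (hqd : ∀ z, q z z = 0)
    (f : C(S × S, ℝ)) (hfd : ∀ σ : S, f (σ, σ) = 0) (p : E × E) (ζ : E → S) :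
    LVM q (fun ζ' => f (ζ' p.1, ζ' p.2)) ζ = ∑ r : E × E, Qhat q p r * f (ζ r.1, ζ r.2) := by
  obtain ⟨a, b⟩ := p
  have hRHS : ∑ r : E × E, Qhat q (a, b) r * f (ζ r.1, ζ r.2)
      = (∑ r : E × E, QhatOff q (a, b) r * f (ζ r.1, ζ r.2))
        - (∑ r' : E × E, QhatOff q (a, b) r') * f (ζ a, ζ b) := by
    simp only [aux_qhat_split q (a, b), add_mul, Finset.sum_add_distrib]
    congr 1
    have : ∀ r : E × E, (if r = (a, b) then -(∑ r' : E × E, QhatOff q (a, b) r') else 0)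
        * f (ζ r.1, ζ r.2)
        = (if r = (a, b) then -((∑ r' : E × E, QhatOff q (a, b) r') * f (ζ a, ζ b)) else 0) := by
      intro r
      rcases eq_or_ne r (a, b) with rfl | h
      · simp [neg_mul]
      · simp [h]
    rw [Finset.sum_congr rfl fun r _ => this r, Finset.sum_ite_eq' Finset.univ]
    simp
  rcases eq_or_ne a b with rfl | hab
  · rw [hRHS]
    have h1 : ∑ r : E × E, QhatOff q (a, a) r * f (ζ r.1, ζ r.2) = 0 := by
      rw [qhatOff_apply_diag q a _ (hqd a)]
      exact Finset.sum_eq_zero fun c _ => by rw [hfd]; ring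
    rw [h1, hfd, mul_zero, sub_zero]
    simp only [LVM]
    refine Finset.sum_eq_zero fun z _ => Finset.sum_eq_zero fun w _ => ?_
    simp [hfd]
  · rw [hRHS, qhatOff_apply_offdiag q hab _ (hqd a) (hqd b), qhatOff_sum_offdiag q hab hq1 hqd]
    simp only [LVM]
    have hzero : ∀ z ∈ Finset.univ, z ∉ ({a, b} : Finset E) →
        ∑ w : E, q z w * (f ((Function.update ζ z (ζ w)) a, (Function.update ζ z (ζ w)) b)
          - f (ζ a, ζ b)) = 0 := by
      intro z _ hz
      simp only [Finset.mem_insert, Finset.mem_singleton, not_or] at hz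
      refine Finset.sum_eq_zero fun w _ => ?_
      rw [Function.update_of_ne (Ne.symm hz.1), Function.update_of_ne (Ne.symm hz.2)]
      ring
    rw [← Finset.sum_subset (Finset.subset_univ ({a, b} : Finset E)) hzero,
      Finset.sum_pair hab]
    have ha : ∑ w : E, q a w * (f ((Function.update ζ a (ζ w)) a, (Function.update ζ a (ζ w)) b)
        - f (ζ a, ζ b)) = (∑ w : E, q a w * f (ζ w, ζ b)) - f (ζ a, ζ b) := by
      have : ∀ w : E, (Function.update ζ a (ζ w)) a = ζ w := fun w => Function.update_self _ _ _
      simp only [this, Function.update_of_ne (Ne.symm hab), mul_sub, Finset.sum_sub_distrib,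
        ← Finset.sum_mul, hq1, one_mul]
    have hb : ∑ w : E, q b w * (f ((Function.update ζ b (ζ w)) a, (Function.update ζ b (ζ w)) b)
        - f (ζ a, ζ b)) = (∑ w : E, q b w * f (ζ a, ζ w)) - f (ζ a, ζ b) := by
      have : ∀ w : E, (Function.update ζ b (ζ w)) b = ζ w := fun w => Function.update_self _ _ _
      simp only [this, Function.update_of_ne hab, mul_sub, Finset.sum_sub_distrib,
        ← Finset.sum_mul, hq1, one_mul]
    rw [ha, hb]
    ring
end Dual

section LmuBound
variable {E : Type*} [Fintype E] [DecidableEq E]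
  {S : Type*} [MetricSpace S] [CompactSpace S] [MeasurableSpace S] [BorelSpace S]

lemma aux_lmu_diag (μ : Measure S) (f : C(S × S, ℝ)) (hfd : ∀ σ : S, f (σ, σ) = 0)
    (a : E) (ζ : E → S) : Lmu μ (fun ζ' => f (ζ' a, ζ' a)) ζ = 0 := by
  simp only [Lmu]
  refine Finset.sum_eq_zero fun z _ => ?_
  simp [hfd]

lemma aux_lmu_bound (μ : Measure S) [IsFiniteMeasure μ] (f : C(S × S, ℝ))
    (hf1 : ∀ p : S × S, |f p| ≤ 1) (a b : E) (ζ : E → S) :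
    |Lmu μ (fun ζ' => f (ζ' a, ζ' b)) ζ| ≤ 4 * (μ Set.univ).toReal := by
  simp only [Lmu]
  set T : E → ℝ := fun z => ∫ σ, (f ((Function.update ζ z σ) a, (Function.update ζ z σ) b)
    - f (ζ a, ζ b)) ∂μ with hT
  have hT0 : ∀ z ∈ Finset.univ, z ∉ ({a, b} : Finset E) → T z = 0 := by
    intro z _ hz
    simp only [Finset.mem_insert, Finset.mem_singleton, not_or] at hz
    rw [hT]
    simp only [Function.update_of_ne (Ne.symm hz.1), Function.update_of_ne (Ne.symm hz.2),
      sub_self, integral_zero]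
  have hTb : ∀ z : E, |T z| ≤ 2 * (μ Set.univ).toReal := by
    intro z
    rw [hT]
    have := norm_integral_le_of_norm_le_const (μ := μ)
      (f := fun σ => f ((Function.update ζ z σ) a, (Function.update ζ z σ) b) - f (ζ a, ζ b))
      (C := 2) (Filter.Eventually.of_forall fun σ => by
        rw [Real.norm_eq_abs]
        calc |f ((Function.update ζ z σ) a, (Function.update ζ z σ) b) - f (ζ a, ζ b)|
            ≤ |f ((Function.update ζ z σ) a, (Function.update ζ z σ) b)| + |f (ζ a, ζ b)| :=
              abs_sub _ _
          _ ≤ 2 := by have := hf1 ((Function.update ζ z σ) a, (Function.update ζ z σ) b)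
                      have := hf1 (ζ a, ζ b); linarith)
    simpa [Real.norm_eq_abs, measureReal_def] using this
  calc |∑ z : E, T z| = |∑ z ∈ ({a, b} : Finset E), T z| := by
        rw [Finset.sum_subset (Finset.subset_univ _) hT0]
    _ ≤ ∑ z ∈ ({a, b} : Finset E), |T z| := Finset.abs_sum_le_sum_abs _ _
    _ ≤ ∑ _z ∈ ({a, b} : Finset E), 2 * (μ Set.univ).toReal :=
        Finset.sum_le_sum fun z _ => hTb z
    _ ≤ 2 * (2 * (μ Set.univ).toReal) := by
        rw [Finset.sum_const, nsmul_eq_mul]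
        have hcard : (({a, b} : Finset E).card : ℝ) ≤ 2 := by
          have := Finset.card_insert_le a ({b} : Finset E)
          simp only [Finset.card_singleton] at this
          exact_mod_cast this
        nlinarith [ENNReal.toReal_nonneg (a := μ Set.univ)]
    _ = 4 * (μ Set.univ).toReal := by ring
end LmuBound



/-- The bound from the proof of Proposition 3.4: there is a universal constant `C` with
`sup_ξ E_ξ[f(ξ_t(x), ξ_t(y))] ≤ (C+1) P(M_{x,y} > t) + C μ(S) ∫_0^t P(M_{x,y} > r) dr`. -/
theorem two_point_function_upper_bound :
    ∃ C : ℝ, 0 < C ∧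
      ∀ (E : Type u) [Fintype E] [DecidableEq E],
        2 ≤ Fintype.card E →
        ∀ (S : Type v) [MetricSpace S] [CompactSpace S] [MeasurableSpace S] [BorelSpace S],
        ∀ (q : E → E → ℝ) (π : E → ℝ) (μ : Measure S) [IsFiniteMeasure μ],
          (∀ x y, 0 ≤ q x y) → (∀ x, ∑ y, q x y = 1) → (∀ x, q x x = 0) →
          (∀ x y : E, ∃ n : ℕ, 0 < ((Matrix.of q) ^ n) x y) →
          (∀ x, 0 < π x) → (∑ x, π x = 1) →
          (∀ y, ∑ x, π x * q x y = π y) →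
          ∀ (L : C((E → S), ℝ) →L[ℝ] C((E → S), ℝ)),
            (∀ (F : C((E → S), ℝ)) (ζ : E → S), L F ζ = LVM q (⇑F) ζ + Lmu μ (⇑F) ζ) →
            ∀ (f : C(S × S, ℝ)),
              (∀ σ : S, f (σ, σ) = 0) → (∀ p : S × S, |f p| ≤ 1) →
              ∀ (x y : E) (t : ℝ), 0 ≤ t →
                ∀ ξ : E → S,
                  expOp (t • L) (pairObs x y f) ξ ≤
                    (C + 1) * meetGT q t x y +
                      C * (μ Set.univ).toReal * ∫ r in (0:ℝ)..t, meetGT q r x y := by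
  refine ⟨4, by norm_num, ?_⟩
  intro E _ _ hcard S _ _ _ _ q π μ _ hq0 hq1 hqd _hirr _hπ _hπ1 _hπq L hL f hfd hf1 x y t ht ξ
  letI : NormedAddCommGroup C((E → S), ℝ) := inferInstance
  letI : NormedSpace ℝ C((E → S), ℝ) := inferInstance
  have hμS0 : (0:ℝ) ≤ (μ Set.univ).toReal := ENNReal.toReal_nonneg
  set μS : ℝ := (μ Set.univ).toReal with hμS
  set Φ : E × E → C((E → S), ℝ) := fun r => pairObs r.1 r.2 f with hΦ
  set v : ℝ → C((E → S), ℝ) :=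
    fun s => ∑ r : E × E, coalSemigroup q s (x, y) r • Φ r with hv
  set vd : ℝ → C((E → S), ℝ) :=
    fun s => ∑ r : E × E, (coalSemigroup q s * Qhat q) (x, y) r • Φ r with hvd
  set w : ℝ → C((E → S), ℝ) := fun s => vd s - L (v s) with hw
  set Eop : ℝ → (C((E → S), ℝ) →L[ℝ] C((E → S), ℝ)) := fun u => expOp (u • L) with hEop
  set H : ℝ → ℝ := fun s => Eop (t - s) (v s) ξ with hH
  set D : ℝ → ℝ := fun s => Eop (t - s) (w s) ξ with hD
  -- derivative of v
  have hvder : ∀ s : ℝ, HasDerivAt v (vd s) s := by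
    intro s
    exact HasDerivAt.fun_sum fun r _ => (coal_hasDerivAt q (x, y) r s).smul_const (Φ r)
  -- derivative of s ↦ Eop (t - s)
  have hEopder : ∀ s : ℝ, HasDerivAt (fun s' : ℝ => Eop (t - s'))
      ((-1 : ℝ) • (Eop (t - s) * L)) s := by
    intro s
    have hg := hasDerivAt_exp_smul_const (𝕂 := ℝ) L (t - s)
    have hh : HasDerivAt (fun s' : ℝ => t - s') (-1 : ℝ) s := by
      simpa using (hasDerivAt_id s).const_sub t
    exact hg.scomp s hh
  -- derivative of H
  have hHder : ∀ s : ℝ, HasDerivAt H (D s) s := by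
    intro s
    have h1 := (hEopder s).clm_apply (hvder s)
    have key : ((-1 : ℝ) • (Eop (t - s) * L)) (v s) + (Eop (t - s)) (vd s)
        = (Eop (t - s)) (w s) := by
      rw [hw]
      simp only [ContinuousLinearMap.smul_apply, ContinuousLinearMap.mul_apply,
        neg_one_smul, map_sub]
      abel
    rw [key] at h1
    exact (ContinuousMap.evalCLM ℝ ξ).hasFDerivAt.comp_hasDerivAt s h1
    -- basic positivity facts
  have hmeet_nonneg : ∀ s : ℝ, 0 ≤ s → 0 ≤ meetGT q s x y := by
    intro s hs
    exact Finset.sum_nonneg fun r _ => coal_nonneg q hq0 hq1 hqd hs (x, y) r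
  have hmeet_cont : Continuous fun s : ℝ => meetGT q s x y := by
    unfold meetGT
    exact continuous_finset_sum _ fun r _ => coal_continuous q (x, y) r
  -- endpoint values
  have hv0 : v 0 = pairObs x y f := by
    rw [hv]
    have hcoal0 : coalSemigroup q 0 = (1 : Matrix (E × E) (E × E) ℝ) := by
      unfold coalSemigroup; rw [zero_smul, NormedSpace.exp_zero]
    simp only [hcoal0]
    rw [Finset.sum_congr rfl fun r _ => by
      rw [Matrix.one_apply, ite_smul, one_smul, zero_smul]]
    rw [Finset.sum_ite_eq Finset.univ (x, y) Φ]
    simp [hΦ]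
  have hH0 : H 0 = expOp (t • L) (pairObs x y f) ξ := by
    rw [hH]
    simp only [sub_zero, hv0]; rfl
  have hHt : H t = v t ξ := by
    show (Eop (t - t)) (v t) ξ = v t ξ
    have h0 : Eop (t - t) = (1 : C((E → S), ℝ) →L[ℝ] C((E → S), ℝ)) := by
      rw [hEop, sub_self]
      show expOp ((0:ℝ) • L) = 1
      unfold expOp; rw [zero_smul, NormedSpace.exp_zero]
    rw [h0, ContinuousLinearMap.one_apply]
  -- pointwise formula for v s ξ and bound at time t
  have hvapp : ∀ (s : ℝ) (ζ : E → S),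
      v s ζ = ∑ r : E × E, coalSemigroup q s (x, y) r * f (ζ r.1, ζ r.2) := by
    intro s ζ
    show (∑ r : E × E, coalSemigroup q s (x, y) r • Φ r) ζ
      = ∑ r : E × E, coalSemigroup q s (x, y) r * f (ζ r.1, ζ r.2)
    rw [ContinuousMap.sum_apply]
    exact Finset.sum_congr rfl fun r _ => by
      rw [ContinuousMap.smul_apply, smul_eq_mul]; rfl
  have hHt_le : H t ≤ meetGT q t x y := by
    rw [hHt, hvapp t ξ]
    rw [← Finset.sum_filter_add_sum_filter_not Finset.univ (fun r : E × E => r.1 ≠ r.2)]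
    have hdiag : ∑ r ∈ Finset.univ.filter (fun r : E × E => ¬ r.1 ≠ r.2),
        coalSemigroup q t (x, y) r * f (ξ r.1, ξ r.2) = 0 := by
      refine Finset.sum_eq_zero fun r hr => ?_
      simp only [Finset.mem_filter, not_ne_iff] at hr
      rw [← hr.2, hfd, mul_zero]
    rw [hdiag, add_zero]
    unfold meetGT
    refine Finset.sum_le_sum fun r hr => ?_
    have hnn := coal_nonneg q hq0 hq1 hqd ht (x, y) r
    calc coalSemigroup q t (x, y) r * f (ξ r.1, ξ r.2)
        ≤ coalSemigroup q t (x, y) r * 1 := by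
          refine mul_le_mul_of_nonneg_left ?_ hnn
          exact le_trans (le_abs_self _) (hf1 _)
      _ = coalSemigroup q t (x, y) r := mul_one _
  -- bound on w
  have hwb : ∀ s : ℝ, 0 ≤ s → ‖w s‖ ≤ 4 * μS * meetGT q s x y := by
    intro s hs
    have hrhs0 : 0 ≤ 4 * μS * meetGT q s x y :=
      mul_nonneg (by positivity) (hmeet_nonneg s hs)
    refine (ContinuousMap.norm_le _ hrhs0).mpr fun ζ => ?_
    have hLv : L (v s) = ∑ r : E × E, coalSemigroup q s (x, y) r • L (Φ r) := by
      show L (∑ r : E × E, coalSemigroup q s (x, y) r • Φ r)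
        = ∑ r : E × E, coalSemigroup q s (x, y) r • L (Φ r)
      rw [map_sum]
      exact Finset.sum_congr rfl fun r _ => by rw [_root_.map_smul]
    have hws : w s ζ = vd s ζ - (∑ r : E × E, coalSemigroup q s (x, y) r • L (Φ r)) ζ := by
      show (vd s - L (v s)) ζ = _
      rw [ContinuousMap.sub_apply, hLv]
    have hvdapp : vd s ζ
        = ∑ r' : E × E, (coalSemigroup q s * Qhat q) (x, y) r' * f (ζ r'.1, ζ r'.2) := by
      show (∑ r : E × E, (coalSemigroup q s * Qhat q) (x, y) r • Φ r) ζ = _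
      rw [ContinuousMap.sum_apply]
      exact Finset.sum_congr rfl fun r _ => by
        rw [ContinuousMap.smul_apply, smul_eq_mul]; rfl
    have hLΦ : ∀ r : E × E, (L (Φ r)) ζ
        = (∑ r' : E × E, Qhat q r r' * f (ζ r'.1, ζ r'.2)) + Lmu μ (⇑(Φ r)) ζ := by
      intro r
      rw [hL (Φ r) ζ]
      congr 1
      exact aux_duality q hq1 hqd f hfd r ζ
    have happly : (∑ r : E × E, coalSemigroup q s (x, y) r • L (Φ r)) ζ
        = ∑ r : E × E, coalSemigroup q s (x, y) r * (L (Φ r)) ζ := by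
      rw [ContinuousMap.sum_apply]
      exact Finset.sum_congr rfl fun r _ => by rw [ContinuousMap.smul_apply, smul_eq_mul]
    have hswap : ∑ r : E × E, coalSemigroup q s (x, y) r
          * (∑ r' : E × E, Qhat q r r' * f (ζ r'.1, ζ r'.2))
        = ∑ r' : E × E, (coalSemigroup q s * Qhat q) (x, y) r' * f (ζ r'.1, ζ r'.2) := by
      simp only [Finset.mul_sum]
      rw [Finset.sum_comm]
      refine Finset.sum_congr rfl fun r' _ => ?_
      rw [Matrix.mul_apply, Finset.sum_mul]
      exact Finset.sum_congr rfl fun r _ => by ring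
    have hwval : w s ζ = -∑ r : E × E, coalSemigroup q s (x, y) r * Lmu μ (⇑(Φ r)) ζ := by
      rw [hws, happly, hvdapp]
      simp only [hLΦ, mul_add]
      rw [Finset.sum_add_distrib, hswap]
      ring
    rw [Real.norm_eq_abs, hwval, abs_neg]
    calc |∑ r : E × E, coalSemigroup q s (x, y) r * Lmu μ (⇑(Φ r)) ζ|
        ≤ ∑ r : E × E, coalSemigroup q s (x, y) r * |Lmu μ (⇑(Φ r)) ζ| := by
          refine le_trans (Finset.abs_sum_le_sum_abs _ _) (Finset.sum_le_sum fun r _ => ?_)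
          rw [abs_mul, abs_of_nonneg (coal_nonneg q hq0 hq1 hqd hs (x, y) r)]
      _ ≤ 4 * μS * meetGT q s x y := by
          rw [← Finset.sum_filter_add_sum_filter_not Finset.univ
            (fun r : E × E => r.1 ≠ r.2)]
          have hdiag0 : ∑ r ∈ Finset.univ.filter (fun r : E × E => ¬ r.1 ≠ r.2),
              coalSemigroup q s (x, y) r * |Lmu μ (⇑(Φ r)) ζ| = 0 := by
            refine Finset.sum_eq_zero fun r hr => ?_
            simp only [Finset.mem_filter, not_ne_iff] at hr
            have : Lmu μ (⇑(Φ r)) ζ = 0 := by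
              have hcoe : ⇑(Φ r) = fun ζ' => f (ζ' r.1, ζ' r.1) := by
                funext ζ'; show f (ζ' r.1, ζ' r.2) = f (ζ' r.1, ζ' r.1)
                rw [← hr.2]
              rw [hcoe]
              exact aux_lmu_diag μ f hfd r.1 ζ
            rw [this, abs_zero, mul_zero]
          rw [hdiag0, add_zero]
          unfold meetGT
          rw [mul_comm (4 * μS), Finset.sum_mul]
          refine Finset.sum_le_sum fun r hr => ?_
          refine mul_le_mul_of_nonneg_left ?_ (coal_nonneg q hq0 hq1 hqd hs (x, y) r)
          rw [hμS]
          exact aux_lmu_bound μ f hf1 r.1 r.2 ζ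
  -- bound on D
  have hDb : ∀ s : ℝ, 0 ≤ s → s ≤ t → |D s| ≤ 4 * μS * meetGT q s x y := by
    intro s hs hst
    show |(Eop (t - s)) (w s) ξ| ≤ _
    calc |(Eop (t - s)) (w s) ξ| ≤ ‖(Eop (t - s)) (w s)‖ := by
          rw [← Real.norm_eq_abs]
          exact ContinuousMap.norm_coe_le_norm _ ξ
      _ ≤ ‖Eop (t - s)‖ * ‖w s‖ := ContinuousLinearMap.le_opNorm _ _
      _ ≤ 1 * (4 * μS * meetGT q s x y) := by
          refine mul_le_mul ?_ (hwb s hs) (norm_nonneg _) zero_le_one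
          exact aux_contraction q μ hq0 hq1 L hL (by linarith)
      _ = 4 * μS * meetGT q s x y := one_mul _
  -- continuity of D
  have hvc : Continuous v := by
    rw [hv]
    exact continuous_finset_sum _ fun r _ =>
      (coal_continuous q (x, y) r).smul continuous_const
  have hvdc : Continuous vd := by
    rw [hvd]
    refine continuous_finset_sum _ fun r _ => Continuous.fun_smul ?_ continuous_const
    have hmul : (fun s : ℝ => (coalSemigroup q s * Qhat q) (x, y) r)
        = fun s : ℝ => ∑ r'' : E × E, coalSemigroup q s (x, y) r'' * Qhat q r'' r :=
      funext fun s => Matrix.mul_apply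
    rw [hmul]
    exact continuous_finset_sum _ fun r'' _ =>
      (coal_continuous q (x, y) r'').mul continuous_const
  have hwc : Continuous w := by
    rw [hw]; exact hvdc.sub (L.continuous.comp hvc)
  have hEopc : Continuous fun s : ℝ => Eop (t - s) := by
    rw [hEop]
    show Continuous fun s : ℝ => NormedSpace.exp ((t - s) • L)
    letI : NormedAlgebra ℚ (C((E → S), ℝ) →L[ℝ] C((E → S), ℝ)) :=
      NormedAlgebra.restrictScalars ℚ ℝ _
    exact NormedSpace.exp_continuous.comp
      ((continuous_const.sub continuous_id).smul continuous_const)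
  have hDc : Continuous D := by
    rw [hD]
    have h1 : Continuous fun s : ℝ => (Eop (t - s)) (w s) :=
      isBoundedBilinearMap_apply.continuous.comp (hEopc.prodMk hwc)
    exact (continuous_eval_const ξ).comp h1
  have hDint : IntervalIntegrable D MeasureTheory.volume 0 t := hDc.intervalIntegrable 0 t
  have hgint : IntervalIntegrable (fun s : ℝ => 4 * μS * meetGT q s x y)
      MeasureTheory.volume 0 t := (continuous_const.mul hmeet_cont).intervalIntegrable 0 t
  -- fundamental theorem of calculus
  have hFTC : ∫ s in (0:ℝ)..t, D s = H t - H 0 :=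
    intervalIntegral.integral_eq_sub_of_hasDerivAt (fun s _ => hHder s) hDint
  -- integral bound
  have habs : |∫ s in (0:ℝ)..t, D s| ≤ |∫ s in (0:ℝ)..t, 4 * μS * meetGT q s x y| := by
    rw [← Real.norm_eq_abs (∫ s in (0:ℝ)..t, D s)]
    refine intervalIntegral.norm_integral_le_abs_of_norm_le ?_ hgint
    refine (MeasureTheory.ae_restrict_mem measurableSet_uIoc).mono fun s hs => ?_
    rw [Set.uIoc_of_le ht] at hs
    rw [Real.norm_eq_abs]
    exact hDb s hs.1.le hs.2
  have hgnn : 0 ≤ ∫ s in (0:ℝ)..t, 4 * μS * meetGT q s x y :=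
    intervalIntegral.integral_nonneg ht fun s hs =>
      mul_nonneg (by positivity) (hmeet_nonneg s hs.1)
  have hgval : ∫ s in (0:ℝ)..t, 4 * μS * meetGT q s x y
      = 4 * μS * ∫ s in (0:ℝ)..t, meetGT q s x y := by
    exact intervalIntegral.integral_const_mul _ _
  -- conclusion
  have hfinal : expOp (t • L) (pairObs x y f) ξ = H 0 := hH0.symm
  rw [hfinal]
  have h1 : H 0 = H t - ∫ s in (0:ℝ)..t, D s := by rw [hFTC]; ring
  have h2 : -(∫ s in (0:ℝ)..t, D s) ≤ |∫ s in (0:ℝ)..t, D s| := neg_le_abs _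
  have h3 : |∫ s in (0:ℝ)..t, 4 * μS * meetGT q s x y|
      = 4 * μS * ∫ s in (0:ℝ)..t, meetGT q s x y := by
    rw [abs_of_nonneg hgnn, hgval]
  have h4 := hmeet_nonneg t ht
  linarith [hHt_le, habs]
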